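/- Fix reals a_1 < b_1 and a_2 < b_2 and define g(θ_1, θ_2) = ln ∫_{a_1}^{b_1} (1/√(2π)) e^{−(x−θ_1)²/2} dx + ln ∫_{a_2}^{b_2} (1/√(2π)) e^{−(x−θ_2)²/2} dx on ℝ². Then g is concave and attains its unique global maximum at θ* = ((a_1+b_1)/2, (a_2+b_2)/2). Consequently, the parameter point θ* is identifiable under the binary quantizer with region I^{(1)} = (a_1,b_1) × (a_2,b_2): no other θ ∈ ℝ² satisfies g(θ) = g(θ*). -/

import Mathlib

open Real MeasureTheory intervalIntegral Set

noncomputable def gs : ℝ → ℝ := fun u => Real.exp (-u ^ 2 / 2)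

lemma gs_pos (u : ℝ) : 0 < gs u := Real.exp_pos _

lemma gs_cont : Continuous gs := by
  unfold gs; fun_prop

lemma hasDerivAt_gs (u : ℝ) : HasDerivAt gs (-u * gs u) u := by
  have h1 : HasDerivAt (fun u : ℝ => -u ^ 2 / 2) (-u) u := by
    have := ((hasDerivAt_pow 2 u).neg).div_const 2
    simpa using this.congr_deriv (by ring)
  have := (Real.hasDerivAt_exp (-u ^ 2 / 2)).comp u h1
  have h3 : HasDerivAt gs (Real.exp (-u ^ 2 / 2) * -u) u := this
  exact h3.congr_deriv (by unfold gs; ring)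

noncomputable def Psi (a b θ : ℝ) : ℝ := ∫ u in (a - θ)..(b - θ), gs u
noncomputable def Psi' (a b θ : ℝ) : ℝ := gs (a - θ) - gs (b - θ)
noncomputable def Psi'' (a b θ : ℝ) : ℝ :=
  (a - θ) * gs (a - θ) - (b - θ) * gs (b - θ)

lemma Psi_pos {a b : ℝ} (hab : a < b) (θ : ℝ) : 0 < Psi a b θ :=
  intervalIntegral_pos_of_pos (gs_cont.intervalIntegrable _ _)
    (fun x => gs_pos x) (by linarith)

noncomputable def G (t : ℝ) : ℝ := ∫ u in (0:ℝ)..t, gs u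

lemma hasDerivAt_G (t : ℝ) : HasDerivAt G (gs t) t :=
  intervalIntegral.integral_hasDerivAt_right
    (gs_cont.intervalIntegrable _ _)
    (gs_cont.stronglyMeasurableAtFilter _ _) gs_cont.continuousAt

lemma Psi_eq (a b θ : ℝ) : Psi a b θ = G (b - θ) - G (a - θ) := by
  unfold Psi G
  rw [intervalIntegral.integral_interval_sub_left (gs_cont.intervalIntegrable _ _)
    (gs_cont.intervalIntegrable _ _)]

lemma hasDerivAt_Psi (a b θ : ℝ) : HasDerivAt (Psi a b) (Psi' a b θ) θ := by
  have hin : ∀ c : ℝ, HasDerivAt (fun θ : ℝ => c - θ) (-1) θ := fun c => by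
    exact (hasDerivAt_id θ).const_sub c
  have hb := (hasDerivAt_G (b - θ)).comp θ (hin b)
  have ha := (hasDerivAt_G (a - θ)).comp θ (hin a)
  have := hb.sub ha
  have h2 : HasDerivAt (fun θ => G (b - θ) - G (a - θ)) (Psi' a b θ) θ := by
    exact this.congr_deriv (by unfold Psi'; ring)
  exact h2.congr_of_eventuallyEq (Filter.Eventually.of_forall fun x => (Psi_eq a b x))

lemma hasDerivAt_Psi' (a b θ : ℝ) : HasDerivAt (Psi' a b) (Psi'' a b θ) θ := by
  have hin : ∀ c : ℝ, HasDerivAt (fun θ : ℝ => c - θ) (-1) θ := fun c => by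
    exact (hasDerivAt_id θ).const_sub c
  have ha := (hasDerivAt_gs (a - θ)).comp θ (hin a)
  have hb := (hasDerivAt_gs (b - θ)).comp θ (hin b)
  have := ha.sub hb
  exact this.congr_deriv (by unfold Psi''; ring)

lemma key_ineq {α β : ℝ} (hαβ : α < β) :
    (α * gs α - β * gs β) * (∫ u in α..β, gs u) ≤ (gs α - gs β) ^ 2 := by
  set Z := ∫ u in α..β, gs u with hZdef
  have hZpos : 0 < Z :=
    intervalIntegral_pos_of_pos (gs_cont.intervalIntegrable _ _) (fun x => gs_pos x) hαβ
  set M := ∫ u in α..β, u * gs u with hMdef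
  set S := ∫ u in α..β, u ^ 2 * gs u with hSdef
  have int_ug : IntervalIntegrable (fun u => u * gs u) volume α β :=
    (continuous_id.mul gs_cont).intervalIntegrable _ _
  have int_u2g : IntervalIntegrable (fun u => u ^ 2 * gs u) volume α β :=
    ((continuous_pow 2).mul gs_cont).intervalIntegrable _ _
  have int_g : IntervalIntegrable gs volume α β := gs_cont.intervalIntegrable _ _
  -- e1 : M = gs α - gs β
  have e1 : M = gs α - gs β := by
    have h : ∀ u ∈ uIcc α β, HasDerivAt (fun u => -gs u) (u * gs u) u := fun u _ => by
      exact (hasDerivAt_gs u).neg.congr_deriv (by ring)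
    rw [hMdef, integral_eq_sub_of_hasDerivAt h int_ug]; ring
  -- e5 : S - Z = α gs α - β gs β
  have e5 : S - Z = α * gs α - β * gs β := by
    have h : ∀ u ∈ uIcc α β, HasDerivAt (fun u => -(u * gs u)) (u ^ 2 * gs u - gs u) u :=
      fun u _ => by
        have := ((hasDerivAt_id u).mul (hasDerivAt_gs u)).neg
        simp only [id_eq] at this
        exact this.congr_deriv (by ring)
    have := integral_eq_sub_of_hasDerivAt h (int_u2g.sub int_g)
    rw [intervalIntegral.integral_sub int_u2g int_g] at this
    rw [hSdef, hZdef]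
    linarith [this]
  -- mean bounds
  have hMlb : α * Z ≤ M := by
    rw [hMdef, hZdef, ← intervalIntegral.integral_const_mul]
    apply intervalIntegral.integral_mono_on hαβ.le (int_g.const_mul α) int_ug
    intro u hu
    exact mul_le_mul_of_nonneg_right hu.1 (gs_pos u).le
  have hMub : M ≤ β * Z := by
    rw [hMdef, hZdef, ← intervalIntegral.integral_const_mul]
    apply intervalIntegral.integral_mono_on hαβ.le int_ug (int_g.const_mul β)
    intro u hu
    exact mul_le_mul_of_nonneg_right hu.2 (gs_pos u).le
  set μ := M / Z with hμdef
  have hμ1 : α ≤ μ := (le_div_iff₀ hZpos).mpr hMlb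
  have hμ2 : μ ≤ β := (div_le_iff₀ hZpos).mpr hMub
  -- e2 : S - μ M - Z = (α-μ) gs α - (β-μ) gs β
  have e2 : S - μ * M - Z = (α - μ) * gs α - (β - μ) * gs β := by
    have h : ∀ u ∈ uIcc α β,
        HasDerivAt (fun u => -((u - μ) * gs u)) (u ^ 2 * gs u - μ * (u * gs u) - gs u) u :=
      fun u _ => by
        have := (((hasDerivAt_id u).sub_const μ).mul (hasDerivAt_gs u)).neg
        simp only [id_eq] at this
        exact this.congr_deriv (by ring)
    have := integral_eq_sub_of_hasDerivAt h ((int_u2g.sub (int_ug.const_mul μ)).sub int_g)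
    rw [intervalIntegral.integral_sub (int_u2g.sub (int_ug.const_mul μ)) int_g,
      intervalIntegral.integral_sub int_u2g (int_ug.const_mul μ),
      intervalIntegral.integral_const_mul] at this
    rw [hSdef, hZdef, hMdef]
    linarith [this]
  have hb : (α - μ) * gs α - (β - μ) * gs β ≤ 0 := by
    nlinarith [gs_pos α, gs_pos β]
  have h3 : S - Z ≤ μ * M := by linarith
  have h4 : (α * gs α - β * gs β) * Z ≤ μ * M * Z := by
    rw [← e5]; exact mul_le_mul_of_nonneg_right h3 hZpos.le
  have h5 : μ * M * Z = M ^ 2 := by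
    rw [hμdef]; field_simp
  rw [← e1]; calc (α * gs α - β * gs β) * Z ≤ μ * M * Z := h4
    _ = M ^ 2 := h5

noncomputable def psi (a b θ : ℝ) : ℝ := Real.log (Psi a b θ)

lemma hasDerivAt_psi {a b : ℝ} (hab : a < b) (θ : ℝ) :
    HasDerivAt (psi a b) (Psi' a b θ / Psi a b θ) θ := by
  have h := (Real.hasDerivAt_log (Psi_pos hab θ).ne').comp θ (hasDerivAt_Psi a b θ)
  have : HasDerivAt (fun θ => Real.log (Psi a b θ)) (Psi' a b θ / Psi a b θ) θ := by
    exact h.congr_deriv (by rw [div_eq_inv_mul])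
  exact this

lemma hasDerivAt_psi_deriv {a b : ℝ} (hab : a < b) (θ : ℝ) :
    HasDerivAt (fun θ => Psi' a b θ / Psi a b θ)
      ((Psi'' a b θ * Psi a b θ - Psi' a b θ * Psi' a b θ) / Psi a b θ ^ 2) θ :=
  (hasDerivAt_Psi' a b θ).div (hasDerivAt_Psi a b θ) (Psi_pos hab θ).ne'

lemma psi_deriv2_nonpos {a b : ℝ} (hab : a < b) (θ : ℝ) :
    (Psi'' a b θ * Psi a b θ - Psi' a b θ * Psi' a b θ) / Psi a b θ ^ 2 ≤ 0 := by
  apply div_nonpos_of_nonpos_of_nonneg _ (sq_nonneg _)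
  have := key_ineq (show a - θ < b - θ by linarith)
  unfold Psi Psi' Psi''
  nlinarith [this]

lemma psi_concave {a b : ℝ} (hab : a < b) : ConcaveOn ℝ univ (psi a b) := by
  apply concaveOn_of_hasDerivWithinAt2_nonpos (f' := fun θ => Psi' a b θ / Psi a b θ)
    (f'' := fun θ => (Psi'' a b θ * Psi a b θ - Psi' a b θ * Psi' a b θ) / Psi a b θ ^ 2)
    convex_univ
  · exact fun θ _ => ((hasDerivAt_psi hab θ).continuousAt).continuousWithinAt
  · intro θ _
    exact ((hasDerivAt_psi hab θ).hasDerivWithinAt)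
  · intro θ _
    exact ((hasDerivAt_psi_deriv hab θ).hasDerivWithinAt)
  · intro θ _
    exact psi_deriv2_nonpos hab θ

lemma psi_cont {a b : ℝ} (hab : a < b) : Continuous (psi a b) :=
  Differentiable.continuous (fun θ => (hasDerivAt_psi hab θ).differentiableAt)

lemma psi_deriv_eq {a b : ℝ} (hab : a < b) (θ : ℝ) :
    deriv (psi a b) θ = Psi' a b θ / Psi a b θ := (hasDerivAt_psi hab θ).deriv

lemma psi_lt_max {a b : ℝ} (hab : a < b) {t : ℝ} (ht : t ≠ (a + b) / 2) :
    psi a b t < psi a b ((a + b) / 2) := by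
  set m := (a + b) / 2 with hm
  rcases lt_or_gt_of_ne ht with h | h
  · -- t < m : psi strictly increasing on Iic m
    have hmono : StrictMonoOn (psi a b) (Iic m) := by
      apply strictMonoOn_of_deriv_pos (convex_Iic m) ((psi_cont hab).continuousOn)
      intro x hx
      rw [interior_Iic] at hx
      rw [psi_deriv_eq hab]
      apply div_pos _ (Psi_pos hab x)
      unfold Psi'
      have : (b - x) ^ 2 > (a - x) ^ 2 := by nlinarith [mem_Iio.mp hx]
      have := Real.exp_lt_exp.mpr (show -(b - x) ^ 2 / 2 < -(a - x) ^ 2 / 2 by linarith)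
      unfold gs; linarith
    exact hmono (le_of_lt h) (le_refl m) h
  · -- m < t : psi strictly decreasing on Ici m
    have hmono : StrictAntiOn (psi a b) (Ici m) := by
      apply strictAntiOn_of_deriv_neg (convex_Ici m) ((psi_cont hab).continuousOn)
      intro x hx
      rw [interior_Ici] at hx
      rw [psi_deriv_eq hab]
      apply div_neg_of_neg_of_pos _ (Psi_pos hab x)
      unfold Psi'
      have : (a - x) ^ 2 > (b - x) ^ 2 := by nlinarith [mem_Ioi.mp hx]
      have := Real.exp_lt_exp.mpr (show -(a - x) ^ 2 / 2 < -(b - x) ^ 2 / 2 by linarith)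
      unfold gs; linarith
    exact hmono (le_refl m) (le_of_lt h) h

lemma psi_le_max {a b : ℝ} (hab : a < b) (t : ℝ) :
    psi a b t ≤ psi a b ((a + b) / 2) := by
  by_cases ht : t = (a + b) / 2
  · rw [ht]
  · exact (psi_lt_max hab ht).le

lemma integral_eq (a b θ : ℝ) :
    (∫ x in a..b, (Real.sqrt (2 * π))⁻¹ * Real.exp (-(x - θ) ^ 2 / 2)) =
      (Real.sqrt (2 * π))⁻¹ * Psi a b θ := by
  rw [intervalIntegral.integral_const_mul]
  congr 1
  have : (fun x => Real.exp (-(x - θ) ^ 2 / 2)) = fun x => gs (x - θ) := rfl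
  rw [this, intervalIntegral.integral_comp_sub_right gs θ]
  rfl

lemma sqrt2pi_inv_pos : 0 < (Real.sqrt (2 * π))⁻¹ := by
  have : 0 < Real.sqrt (2 * π) := Real.sqrt_pos.mpr (by positivity)
  positivity

lemma log_integral_eq {a b : ℝ} (hab : a < b) (θ : ℝ) :
    Real.log (∫ x in a..b, (Real.sqrt (2 * π))⁻¹ * Real.exp (-(x - θ) ^ 2 / 2)) =
      Real.log (Real.sqrt (2 * π))⁻¹ + psi a b θ := by
  rw [integral_eq, Real.log_mul sqrt2pi_inv_pos.ne' (Psi_pos hab θ).ne']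
  rfl

theorem identifiable_point_exists (a₁ b₁ a₂ b₂ : ℝ) (h₁ : a₁ < b₁) (h₂ : a₂ < b₂)
    (g : ℝ × ℝ → ℝ)
    (hg : ∀ θ : ℝ × ℝ, g θ =
      Real.log (∫ x in a₁..b₁, (Real.sqrt (2 * π))⁻¹ * Real.exp (-(x - θ.1) ^ 2 / 2)) +
      Real.log (∫ x in a₂..b₂, (Real.sqrt (2 * π))⁻¹ * Real.exp (-(x - θ.2) ^ 2 / 2))) :
    ConcaveOn ℝ Set.univ g ∧
    ∀ θ : ℝ × ℝ, θ ≠ ((a₁ + b₁) / 2, (a₂ + b₂) / 2) →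
      g θ < g ((a₁ + b₁) / 2, (a₂ + b₂) / 2) := by
  set C := Real.log (Real.sqrt (2 * π))⁻¹ with hC
  have hgeq : ∀ θ : ℝ × ℝ, g θ = (C + psi a₁ b₁ θ.1) + (C + psi a₂ b₂ θ.2) := by
    intro θ
    rw [hg θ, log_integral_eq h₁, log_integral_eq h₂]
  constructor
  · have hfun : g = fun θ : ℝ × ℝ => (C + psi a₁ b₁ θ.1) + (C + psi a₂ b₂ θ.2) :=
      funext hgeq
    rw [hfun]
    have hc1 : ConcaveOn ℝ univ (fun θ : ℝ × ℝ => psi a₁ b₁ θ.1) := by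
      have := (psi_concave h₁).comp_linearMap (LinearMap.fst ℝ ℝ ℝ)
      exact this
    have hc2 : ConcaveOn ℝ univ (fun θ : ℝ × ℝ => psi a₂ b₂ θ.2) := by
      have := (psi_concave h₂).comp_linearMap (LinearMap.snd ℝ ℝ ℝ)
      exact this
    have hcC : ConcaveOn ℝ (univ : Set (ℝ × ℝ)) (fun _ => C) := concaveOn_const C convex_univ
    exact (hcC.add hc1).add (hcC.add hc2)
  · intro θ hθ
    rw [hgeq θ, hgeq ((a₁ + b₁) / 2, (a₂ + b₂) / 2)]
    simp only
    have hne : θ.1 ≠ (a₁ + b₁) / 2 ∨ θ.2 ≠ (a₂ + b₂) / 2 := by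
      by_contra hcon
      push_neg at hcon
      exact hθ (Prod.ext hcon.1 hcon.2)
    rcases hne with h | h
    · have := psi_lt_max h₁ h
      have := psi_le_max h₂ θ.2
      linarith
    · have := psi_lt_max h₂ h
      have := psi_le_max h₁ θ.1
      linarith
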